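/- arXiv:1112.4625 — 4 statements merged into one kernel-verified Lean document; each statement's English description precedes it below -/
import Mathlib

section
/- Let H be an m×n binary (0-1) matrix regarded over ℤ with m < n, and let β ⊆ [n] with |β| = m+1. Define ω ∈ ℤ^n by ω_i = perm(H_{β∖i}) if i ∈ β and ω_i = 0 otherwise, where H_{β∖i} is the m×m submatrix of H formed by the columns with index in β∖{i}. Then ω lies in the fundamental cone of H: (1) ω_j ≥ 0 for all j ∈ [n]; (2) for every i ∈ [m] and every j with H_{ij} = 1, ω_j ≤ Σ_{j' ≠ j, H_{ij'} = 1} ω_{j'}. -/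
open Matrix Finset

/-- The permanent of a square matrix over a commutative ring. -/
def perm {n : Type*} [DecidableEq n] [Fintype n] {R : Type*} [CommRing R]
    (A : Matrix n n R) : R :=
  ∑ σ : Equiv.Perm n, ∏ i, A i (σ i)

namespace Stmt1Aux

variable {m n : ℕ}

/-- The set of injections `Fin m → Fin n` whose range is `β.erase a`
(given the cardinalities match). -/
def G (β : Finset (Fin n)) (a : Fin n) : Finset (Fin m → Fin n) :=
  Finset.univ.filter (fun g => Function.Injective g ∧ ∀ k, g k ∈ β.erase a)

lemma W_nonneg (H : Matrix (Fin m) (Fin n) ℤ) (h01 : ∀ i j, H i j = 0 ∨ H i j = 1)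
    (g : Fin m → Fin n) : 0 ≤ ∏ r, H r (g r) :=
  Finset.prod_nonneg fun r _ => by rcases h01 r (g r) with h | h <;> simp [h]

lemma perm_eq (H : Matrix (Fin m) (Fin n) ℤ) (β : Finset (Fin n)) (a : Fin n)
    (h : (β.erase a).card = m) :
    perm (H.submatrix id (fun k : Fin m => ((β.erase a).orderIsoOfFin h k : Fin n)))
      = ∑ g ∈ G β a, ∏ r, H r (g r) := by
  unfold perm
  refine Finset.sum_bij
    (fun σ _ => fun k => ((β.erase a).orderIsoOfFin h (σ k) : Fin n)) ?_ ?_ ?_ ?_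
  · intro σ _
    simp only [G, Finset.mem_filter, Finset.mem_univ, true_and]
    constructor
    · intro x y hxy
      exact σ.injective (((β.erase a).orderIsoOfFin h).injective (Subtype.ext hxy))
    · intro k; exact (((β.erase a).orderIsoOfFin h) (σ k)).2
  · intro σ₁ _ σ₂ _ hE
    ext k
    have h1 := congrFun hE k
    have h2 : ((β.erase a).orderIsoOfFin h) (σ₁ k) = ((β.erase a).orderIsoOfFin h) (σ₂ k) :=
      Subtype.ext h1
    exact congrArg Fin.val (((β.erase a).orderIsoOfFin h).injective h2)
  · intro g hg
    simp only [G, Finset.mem_filter, Finset.mem_univ, true_and] at hg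
    obtain ⟨hginj, hgmem⟩ := hg
    set e := (β.erase a).orderIsoOfFin h
    have hinj : Function.Injective (fun k => e.symm ⟨g k, hgmem k⟩) := by
      intro x y hxy
      exact hginj (congrArg Subtype.val (e.symm.injective hxy : _))
    refine ⟨Equiv.ofBijective _ (Finite.injective_iff_bijective.mp hinj),
      Finset.mem_univ _, ?_⟩
    funext k
    show ((e (e.symm ⟨g k, hgmem k⟩)) : Fin n) = g k
    simp
  · intro σ _
    simp [Matrix.submatrix]

lemma key (H : Matrix (Fin m) (Fin n) ℤ) (h01 : ∀ i j, H i j = 0 ∨ H i j = 1)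
    (β : Finset (Fin n)) (i : Fin m) (j : Fin n) (hj : j ∈ β) (hij : H i j = 1) :
    ∑ g ∈ G β j, ∏ r, H r (g r) ≤
      ∑ j' ∈ ((Finset.univ.filter (fun j' => H i j' = 1)).erase j ∩ β),
        ∑ g ∈ G β j', ∏ r, H r (g r) := by
  classical
  set s : Finset (Fin m → Fin n) := (G β j).filter (fun g => H i (g i) = 1) with hs
  have hLHS : ∑ g ∈ G β j, ∏ r, H r (g r) = ∑ g ∈ s, ∏ r, H r (g r) := by
    rw [hs]
    refine (Finset.sum_filter_of_ne ?_).symm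
    intro g _ hne
    by_contra h0
    rcases h01 i (g i) with h | h
    · exact hne (Finset.prod_eq_zero (Finset.mem_univ i) h)
    · exact h0 h
  rw [hLHS, Finset.sum_sigma']
  set T := (((Finset.univ.filter (fun j' => H i j' = 1)).erase j ∩ β)).sigma
    (fun j' => G β j') with hT
  set e : (Fin m → Fin n) → ((_ : Fin n) × (Fin m → Fin n)) :=
    fun g => ⟨g i, Function.update g i j⟩ with he
  have hmem : ∀ g ∈ s, ∀ k, g k ∈ β.erase j := by
    intro g hg
    exact ((Finset.mem_filter.mp (Finset.mem_filter.mp hg).1).2).2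
  have hginj : ∀ g ∈ s, Function.Injective g := by
    intro g hg
    exact ((Finset.mem_filter.mp (Finset.mem_filter.mp hg).1).2).1
  have hW : ∀ g ∈ s, ∏ r, H r (g r) = ∏ r, H r (Function.update g i j r) := by
    intro g hg
    refine Finset.prod_congr rfl fun r _ => ?_
    by_cases hr : r = i
    · subst hr
      rw [Function.update_self, hij, (Finset.mem_filter.mp hg).2]
    · rw [Function.update_of_ne hr]
  have hinjOn : Set.InjOn e s := by
    intro g₁ hg₁ g₂ hg₂ hE
    have h1 : g₁ i = g₂ i := congrArg Sigma.fst hE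
    have h2 : Function.update g₁ i j = Function.update g₂ i j := by
      have := Sigma.mk.inj_iff.mp hE
      exact eq_of_heq this.2
    funext k
    by_cases hk : k = i
    · subst hk; exact h1
    · have := congrFun h2 k
      rwa [Function.update_of_ne hk, Function.update_of_ne hk] at this
  have hsub : s.image e ⊆ T := by
    intro p hp
    obtain ⟨g, hg, rfl⟩ := Finset.mem_image.mp hp
    have hgi : g i ∈ β.erase j := hmem g hg i
    have hgi1 : H i (g i) = 1 := (Finset.mem_filter.mp hg).2
    rw [hT, Finset.mem_sigma]
    constructor
    · rw [Finset.mem_inter]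
      refine ⟨Finset.mem_erase.mpr ⟨(Finset.mem_erase.mp hgi).1, ?_⟩,
        Finset.mem_of_mem_erase hgi⟩
      simp [he, hgi1]
    · simp only [he, G, Finset.mem_filter, Finset.mem_univ, true_and]
      constructor
      · intro a b hab
        by_cases ha : a = i <;> by_cases hb : b = i
        · rw [ha, hb]
        · exfalso
          rw [ha, Function.update_self, Function.update_of_ne hb] at hab
          exact (Finset.mem_erase.mp (hmem g hg b)).1 hab.symm
        · exfalso
          rw [hb, Function.update_self, Function.update_of_ne ha] at hab
          exact (Finset.mem_erase.mp (hmem g hg a)).1 hab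
        · rw [Function.update_of_ne ha, Function.update_of_ne hb] at hab
          exact hginj g hg hab
      · intro k
        by_cases hk : k = i
        · subst hk
          rw [Function.update_self]
          exact Finset.mem_erase.mpr ⟨fun h => (Finset.mem_erase.mp hgi).1 h.symm, hj⟩
        · rw [Function.update_of_ne hk]
          exact Finset.mem_erase.mpr ⟨fun h => hk (hginj g hg h),
            Finset.mem_of_mem_erase (hmem g hg k)⟩
  calc ∑ g ∈ s, ∏ r, H r (g r)
      = ∑ g ∈ s, ∏ r, H r ((e g).2 r) := Finset.sum_congr rfl hW
    _ = ∑ p ∈ s.image e, ∏ r, H r (p.2 r) := (Finset.sum_image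
        (f := fun p : (_ : Fin n) × (Fin m → Fin n) => ∏ r, H r (p.2 r))
        (fun g hg g' hg' h => hinjOn hg hg' h)).symm
    _ ≤ ∑ p ∈ T, ∏ r, H r (p.2 r) := Finset.sum_le_sum_of_subset_of_nonneg hsub
        (fun p _ _ => W_nonneg H h01 p.2)

end Stmt1Aux


open Stmt1Aux in
theorem stmt1 {m n : ℕ} (hmn : m < n) (H : Matrix (Fin m) (Fin n) ℤ)
    (h01 : ∀ i j, H i j = 0 ∨ H i j = 1)
    (β : Finset (Fin n)) (hβ : β.card = m + 1)
    (ω : Fin n → ℤ)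
    (hω : ∀ i : Fin n,
      ω i = if hi : i ∈ β then
        perm (H.submatrix id (fun k : Fin m =>
          ((β.erase i).orderIsoOfFin
            (by rw [Finset.card_erase_of_mem hi, hβ]; omega) k : Fin n)))
      else 0) :
    (∀ j, 0 ≤ ω j) ∧
    ∀ (i : Fin m) (j : Fin n), H i j = 1 →
      ω j ≤ ∑ j' ∈ (Finset.univ.filter (fun j' => H i j' = 1)).erase j, ω j' := by
  have hωeq : ∀ a ∈ β, ω a = ∑ g ∈ G β a, ∏ r, H r (g r) := by
    intro a ha
    rw [hω a, dif_pos ha, perm_eq]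
  have h1 : ∀ j, 0 ≤ ω j := by
    intro j
    by_cases hj : j ∈ β
    · rw [hωeq j hj]
      exact Finset.sum_nonneg fun g _ => W_nonneg H h01 g
    · rw [hω j, dif_neg hj]
  refine ⟨h1, ?_⟩
  intro i j hij
  by_cases hj : j ∈ β
  · rw [hωeq j hj]
    have hsub : ((Finset.univ.filter (fun j' => H i j' = 1)).erase j ∩ β) ⊆
        (Finset.univ.filter (fun j' => H i j' = 1)).erase j := Finset.inter_subset_left
    have hRHS : ∑ j' ∈ ((Finset.univ.filter (fun j' => H i j' = 1)).erase j ∩ β),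
        ∑ g ∈ G β j', ∏ r, H r (g r) ≤
        ∑ j' ∈ (Finset.univ.filter (fun j' => H i j' = 1)).erase j, ω j' := by
      rw [show (∑ j' ∈ ((Finset.univ.filter (fun j' => H i j' = 1)).erase j ∩ β),
          ∑ g ∈ G β j', ∏ r, H r (g r)) =
          ∑ j' ∈ ((Finset.univ.filter (fun j' => H i j' = 1)).erase j ∩ β), ω j' from
        Finset.sum_congr rfl fun j' hj' =>
          (hωeq j' (Finset.mem_inter.mp hj').2).symm]
      exact Finset.sum_le_sum_of_subset_of_nonneg hsub fun j' _ _ => h1 j'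
    exact le_trans (key H h01 β i j hj hij) hRHS
  · rw [hω j, dif_neg hj]
    exact Finset.sum_nonneg fun j' _ => h1 j'
end

section
/- Let P, Q, R be M×M permutation matrices and I the M×M identity matrix (all viewed over ℤ). Then the permanent of the 3M×3M block matrix [[I, I, 0], [I, P, I], [Q, R, I]] equals perm(I + P + Q + R). -/
open Matrix Finset

/-- `P` is a permutation matrix. -/
def IsPermMatrix {M : ℕ} (P : Matrix (Fin M) (Fin M) ℤ) : Prop :=
  ∃ σ : Equiv.Perm (Fin M), ∀ i j, P i j = if σ i = j then 1 else 0

namespace Stmt4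
variable {M : ℕ}
def pm (σ : Equiv.Perm (Fin M)) : Matrix (Fin M) (Fin M) ℤ :=
  Matrix.of fun i j => if σ i = j then 1 else 0
variable (p q r : Equiv.Perm (Fin M))
abbrev A (j : Fin M) : Fin M ⊕ (Fin M ⊕ Fin M) := Sum.inl j
abbrev B (j : Fin M) : Fin M ⊕ (Fin M ⊕ Fin M) := Sum.inr (Sum.inl j)
abbrev C (j : Fin M) : Fin M ⊕ (Fin M ⊕ Fin M) := Sum.inr (Sum.inr j)
def N : Matrix (Fin M ⊕ (Fin M ⊕ Fin M)) (Fin M ⊕ (Fin M ⊕ Fin M)) ℤ :=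
  Matrix.fromBlocks 1 (Matrix.fromCols 1 0) (Matrix.fromRows 1 (pm q))
    (Matrix.fromBlocks (pm p) 1 (pm r) 1)

def Good (σ : Equiv.Perm (Fin M ⊕ (Fin M ⊕ Fin M))) : Prop :=
  ∀ x, N p q r x (σ x) = 1

variable {p q r}
variable {σ : Equiv.Perm (Fin M ⊕ (Fin M ⊕ Fin M))} (hσ : Good p q r σ)

include hσ

lemma rowA (j : Fin M) : σ (A j) = A j ∨ σ (A j) = B j := by
  have h := hσ (A j)
  rcases hx : σ (A j) with i | i | i <;> rw [hx] at h <;>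
    simp [N, Matrix.one_apply] at h <;> subst h <;> simp

lemma rowB (j : Fin M) : σ (B j) = A j ∨ σ (B j) = B (p j) ∨ σ (B j) = C j := by
  have h := hσ (B j)
  rcases hx : σ (B j) with i | i | i <;> rw [hx] at h <;>
    simp [N, pm, Matrix.one_apply] at h <;> subst h <;> simp

lemma rowC (j : Fin M) : σ (C j) = A (q j) ∨ σ (C j) = B (r j) ∨ σ (C j) = C j := by
  have h := hσ (C j)
  rcases hx : σ (C j) with i | i | i <;> rw [hx] at h <;>
    simp [N, pm, Matrix.one_apply] at h <;> subst h <;> simp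

lemma colC (j : Fin M) : σ (B j) = C j ∨ σ (C j) = C j := by
  have h := hσ (σ.symm (C j))
  rw [Equiv.apply_symm_apply] at h
  rcases hx : σ.symm (C j) with i | i | i
  · rw [hx] at h; simp [N] at h
  · rw [hx] at h; simp [N, Matrix.one_apply] at h
    subst h; left; exact ((Equiv.symm_apply_eq σ).mp hx).symm
  · rw [hx] at h; simp [N, Matrix.one_apply] at h
    subst h; right; exact ((Equiv.symm_apply_eq σ).mp hx).symm

end Stmt4

namespace Stmt4
variable {M : ℕ}
def mm (p q r : Equiv.Perm (Fin M)) : Bool × Bool → Equiv.Perm (Fin M)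
  | (false, false) => 1
  | (false, true) => p
  | (true, false) => q
  | (true, true) => r
variable (p q r : Equiv.Perm (Fin M))
def gg (c : Fin M → Bool × Bool) : Fin M → Fin M := fun i => mm p q r (c i) i

def toC (σ : Equiv.Perm (Fin M ⊕ (Fin M ⊕ Fin M))) : Fin M → Bool × Bool :=
  fun j => (decide (σ (B j) = C j), (if σ (B j) = C j then σ (C j) else σ (B j)).isRight)

variable {p q r}
variable {σ : Equiv.Perm (Fin M ⊕ (Fin M ⊕ Fin M))} (hσ : Good p q r σ)
include hσ

lemma main_cases (j : Fin M) :
    (toC σ j = (false, false) ∧ σ (B j) = A j ∧ σ (C j) = C j) ∨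
    (toC σ j = (false, true) ∧ σ (B j) = B (p j) ∧ σ (C j) = C j) ∨
    (toC σ j = (true, false) ∧ σ (B j) = C j ∧ σ (C j) = A (q j)) ∨
    (toC σ j = (true, true) ∧ σ (B j) = C j ∧ σ (C j) = B (r j)) := by
  rcases rowB hσ j with h | h | h
  · have hne : σ (B j) ≠ C j := by rw [h]; simp
    have hc : σ (C j) = C j := (colC hσ j).resolve_left hne
    exact Or.inl ⟨by simp [toC, hne, h], h, hc⟩
  · have hne : σ (B j) ≠ C j := by rw [h]; simp
    have hc : σ (C j) = C j := (colC hσ j).resolve_left hne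
    exact Or.inr (Or.inl ⟨by simp [toC, hne, h], h, hc⟩)
  · have hne : σ (C j) ≠ C j := by
      intro hc
      exact absurd (σ.injective (h.trans hc.symm)) (by simp)
    rcases (rowC hσ j) with hc | hc | hc
    · exact Or.inr (Or.inr (Or.inl ⟨by simp [toC, h, hc], h, hc⟩))
    · exact Or.inr (Or.inr (Or.inr ⟨by simp [toC, h, hc], h, hc⟩))
    · exact absurd hc hne

lemma gg_toC_cases (j : Fin M) :
    (σ (B j) = A (gg p q r (toC σ) j) ∧ σ (C j) = C j) ∨
    (σ (B j) = B (gg p q r (toC σ) j) ∧ σ (C j) = C j) ∨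
    (σ (B j) = C j ∧ σ (C j) = A (gg p q r (toC σ) j)) ∨
    (σ (B j) = C j ∧ σ (C j) = B (gg p q r (toC σ) j)) := by
  rcases main_cases hσ j with ⟨h1, h2, h3⟩ | ⟨h1, h2, h3⟩ | ⟨h1, h2, h3⟩ | ⟨h1, h2, h3⟩ <;>
    simp [gg, h1, mm, h2, h3]

end Stmt4

namespace Stmt4
variable {M : ℕ} {p q r : Equiv.Perm (Fin M)}
variable {σ : Equiv.Perm (Fin M ⊕ (Fin M ⊕ Fin M))} (hσ : Good p q r σ)
include hσ

lemma hit_A {i k : Fin M} (h : σ (B i) = A k ∨ σ (C i) = A k) :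
    gg p q r (toC σ) i = k ∧ (toC σ i).2 = false := by
  rcases main_cases hσ i with ⟨h1, h2, h3⟩ | ⟨h1, h2, h3⟩ | ⟨h1, h2, h3⟩ | ⟨h1, h2, h3⟩ <;>
    rcases h with h | h <;> simp_all [gg, mm]

lemma hit_B {i k : Fin M} (h : σ (B i) = B k ∨ σ (C i) = B k) :
    gg p q r (toC σ) i = k ∧ (toC σ i).2 = true := by
  rcases main_cases hσ i with ⟨h1, h2, h3⟩ | ⟨h1, h2, h3⟩ | ⟨h1, h2, h3⟩ | ⟨h1, h2, h3⟩ <;>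
    rcases h with h | h <;> simp_all [gg, mm]

lemma gg_surj : Function.Surjective (gg p q r (toC σ)) := by
  intro k
  rcases hx : σ.symm (A k) with i | i | i
  · have hxk : σ (A i) = A k := ((Equiv.symm_apply_eq σ).mp hx).symm
    have hik : i = k := by
      rcases rowA hσ i with h | h <;> rw [h] at hxk <;> simp_all
    subst hik
    rcases hy : σ.symm (B i) with i' | i' | i'
    · have hyk : σ (A i') = B i := ((Equiv.symm_apply_eq σ).mp hy).symm
      have : i' = i := by
        rcases rowA hσ i' with h | h <;> rw [h] at hyk <;> simp_all
      subst this
      rw [hxk] at hyk; simp at hyk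
    · exact ⟨i', (hit_B hσ (Or.inl ((Equiv.symm_apply_eq σ).mp hy).symm)).1⟩
    · exact ⟨i', (hit_B hσ (Or.inr ((Equiv.symm_apply_eq σ).mp hy).symm)).1⟩
  · exact ⟨i, (hit_A hσ (Or.inl ((Equiv.symm_apply_eq σ).mp hx).symm)).1⟩
  · exact ⟨i, (hit_A hσ (Or.inr ((Equiv.symm_apply_eq σ).mp hx).symm)).1⟩

lemma gg_bij : Function.Bijective (gg p q r (toC σ)) :=
  (gg_surj hσ).bijective_of_finite

end Stmt4

namespace Stmt4
variable {M : ℕ}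
section
variable (p q r : Equiv.Perm (Fin M)) (c : Fin M → Bool × Bool)
  (hc : Function.Bijective (gg p q r c))

noncomputable def tau : Fin M ≃ Fin M := Equiv.ofBijective _ hc

lemma tau_apply (j : Fin M) : tau p q r c hc j = gg p q r c j := rfl

lemma tau_symm_id (j : Fin M) (h : c j = (false, false)) :
    (tau p q r c hc).symm j = j := by
  have := Equiv.symm_apply_apply (tau p q r c hc) j
  rwa [tau_apply, gg, h] at this

lemma tau_symm_p (j : Fin M) (h : c j = (false, true)) :
    (tau p q r c hc).symm (p j) = j := by
  have := Equiv.symm_apply_apply (tau p q r c hc) j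
  rwa [tau_apply, gg, h] at this

lemma tau_symm_q (j : Fin M) (h : c j = (true, false)) :
    (tau p q r c hc).symm (q j) = j := by
  have := Equiv.symm_apply_apply (tau p q r c hc) j
  rwa [tau_apply, gg, h] at this

lemma tau_symm_r (j : Fin M) (h : c j = (true, true)) :
    (tau p q r c hc).symm (r j) = j := by
  have := Equiv.symm_apply_apply (tau p q r c hc) j
  rwa [tau_apply, gg, h] at this

noncomputable def FF : (Fin M ⊕ (Fin M ⊕ Fin M)) → (Fin M ⊕ (Fin M ⊕ Fin M))
  | Sum.inl j => if (c ((tau p q r c hc).symm j)).2 then A j else B j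
  | Sum.inr (Sum.inl j) =>
      if (c j).1 then C j else if (c j).2 then B (p j) else A j
  | Sum.inr (Sum.inr j) =>
      if (c j).1 then (if (c j).2 then B (r j) else A (q j)) else C j

noncomputable def GG : (Fin M ⊕ (Fin M ⊕ Fin M)) → (Fin M ⊕ (Fin M ⊕ Fin M))
  | Sum.inl j => if (c ((tau p q r c hc).symm j)).2 then A j else
      (if (c ((tau p q r c hc).symm j)).1 then C ((tau p q r c hc).symm j)
       else B ((tau p q r c hc).symm j))
  | Sum.inr (Sum.inl j) => if (c ((tau p q r c hc).symm j)).2 then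
      (if (c ((tau p q r c hc).symm j)).1 then C ((tau p q r c hc).symm j)
       else B ((tau p q r c hc).symm j))
      else A j
  | Sum.inr (Sum.inr j) => if (c j).1 then B j else C j

lemma GG_FF (x : Fin M ⊕ (Fin M ⊕ Fin M)) : GG p q r c hc (FF p q r c hc x) = x := by
  rcases x with j | j | j
  · by_cases h : (c ((tau p q r c hc).symm j)).2 <;> simp [FF, GG, h]
  · rcases hcj : c j with ⟨u, v⟩
    cases u
    · cases v
      · simp [FF, GG, hcj, tau_symm_id p q r c hc j hcj]
      · simp [FF, GG, hcj, tau_symm_p p q r c hc j hcj]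
    · simp [FF, GG, hcj]
  · rcases hcj : c j with ⟨u, v⟩
    cases u
    · simp [FF, GG, hcj]
    · cases v
      · simp [FF, GG, hcj, tau_symm_q p q r c hc j hcj]
      · simp [FF, GG, hcj, tau_symm_r p q r c hc j hcj]

lemma FF_GG (x : Fin M ⊕ (Fin M ⊕ Fin M)) : FF p q r c hc (GG p q r c hc x) = x := by
  have htau : ∀ j, gg p q r c ((tau p q r c hc).symm j) = j := fun j =>
    (tau p q r c hc).apply_symm_apply j
  rcases x with j | j | j
  · rcases hcj : c ((tau p q r c hc).symm j) with ⟨u, v⟩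
    have hj := htau j
    cases v
    · cases u
      · -- c k = (false,false): GG = B k, FF (B k) = A k, and k = j
        have h2 : (tau p q r c hc).symm j = j := by
          rw [gg, hcj] at hj; simpa [mm] using hj
        rw [h2] at hcj
        simp [FF, GG, hcj, h2]
      · -- c k = (true,false): GG = C k, FF (C k) = A (q k) = A j
        rw [gg, hcj] at hj; simp only [mm] at hj
        simp [FF, GG, hcj, hj]
    · simp [FF, GG, hcj]
  · rcases hcj : c ((tau p q r c hc).symm j) with ⟨u, v⟩
    have hj := htau j
    cases v
    · simp [FF, GG, hcj]
    · cases u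
      · rw [gg, hcj] at hj; simp only [mm] at hj
        simp [FF, GG, hcj, hj]
      · rw [gg, hcj] at hj; simp only [mm] at hj
        simp [FF, GG, hcj, hj]
  · rcases hcj : c j with ⟨u, v⟩
    cases u <;> simp [FF, GG, hcj]

noncomputable def toPerm : Equiv.Perm (Fin M ⊕ (Fin M ⊕ Fin M)) :=
  ⟨FF p q r c hc, GG p q r c hc, GG_FF p q r c hc, FF_GG p q r c hc⟩

lemma toPerm_good : Good p q r (toPerm p q r c hc) := by
  intro x
  rcases x with j | j | j
  · by_cases h : (c ((tau p q r c hc).symm j)).2 <;>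
      simp [toPerm, FF, h, N, pm, Matrix.one_apply]
  · rcases hcj : c j with ⟨u, v⟩
    cases u <;> cases v <;> simp [toPerm, FF, hcj, N, pm, Matrix.one_apply]
  · rcases hcj : c j with ⟨u, v⟩
    cases u <;> cases v <;> simp [toPerm, FF, hcj, N, pm, Matrix.one_apply]

end
end Stmt4

namespace Stmt4
variable {M : ℕ} {p q r : Equiv.Perm (Fin M)}

lemma toC_toPerm (c : Fin M → Bool × Bool) (hc : Function.Bijective (gg p q r c)) :
    toC (toPerm p q r c hc) = c := by
  funext j
  rcases hcj : c j with ⟨u, v⟩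
  cases u <;> cases v <;>
    simp [toC, toPerm, FF, hcj]

lemma toPerm_toC {σ : Equiv.Perm (Fin M ⊕ (Fin M ⊕ Fin M))} (hσ : Good p q r σ) :
    toPerm p q r (toC σ) (gg_bij hσ) = σ := by
  apply Equiv.ext; intro x
  simp only [toPerm, Equiv.coe_fn_mk]
  rcases x with j | j | j
  · have hgi : gg p q r (toC σ) ((tau p q r (toC σ) (gg_bij hσ)).symm j) = j :=
      (tau p q r (toC σ) (gg_bij hσ)).apply_symm_apply j
    set i := (tau p q r (toC σ) (gg_bij hσ)).symm j with hi
    rcases main_cases hσ i with ⟨h1, h2, h3⟩ | ⟨h1, h2, h3⟩ | ⟨h1, h2, h3⟩ | ⟨h1, h2, h3⟩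
    · have hij : i = j := by rw [gg, h1] at hgi; simpa [mm] using hgi
      rw [hij] at h2
      rcases rowA hσ j with h | h
      · exact absurd (σ.injective (h.trans h2.symm)) (by simp)
      · rw [h]; simp [FF, ← hi, h1]
    · have hpj : p i = j := by rw [gg, h1] at hgi; simpa [mm] using hgi
      rw [hpj] at h2
      rcases rowA hσ j with h | h
      · rw [h]; simp [FF, ← hi, h1]
      · exact absurd (σ.injective (h.trans h2.symm)) (by simp)
    · have hqj : q i = j := by rw [gg, h1] at hgi; simpa [mm] using hgi
      rw [hqj] at h3
      rcases rowA hσ j with h | h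
      · exact absurd (σ.injective (h.trans h3.symm)) (by simp)
      · rw [h]; simp [FF, ← hi, h1]
    · have hrj : r i = j := by rw [gg, h1] at hgi; simpa [mm] using hgi
      rw [hrj] at h3
      rcases rowA hσ j with h | h
      · rw [h]; simp [FF, ← hi, h1]
      · exact absurd (σ.injective (h.trans h3.symm)) (by simp)
  · rcases main_cases hσ j with ⟨h1, h2, h3⟩ | ⟨h1, h2, h3⟩ | ⟨h1, h2, h3⟩ | ⟨h1, h2, h3⟩ <;>
      simp [FF, h1, h2]
  · rcases main_cases hσ j with ⟨h1, h2, h3⟩ | ⟨h1, h2, h3⟩ | ⟨h1, h2, h3⟩ | ⟨h1, h2, h3⟩ <;>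
      simp [FF, h1, h3]

end Stmt4

namespace Stmt4
variable {M : ℕ} {p q r : Equiv.Perm (Fin M)}

lemma prod_eq_boole {α : Type*} [Fintype α] (f : α → ℤ) (h : ∀ x, f x = 0 ∨ f x = 1) :
    ∏ x, f x = if ∀ x, f x = 1 then 1 else 0 := by
  classical
  split_ifs with hall
  · exact Finset.prod_eq_one fun x _ => hall x
  · push_neg at hall
    obtain ⟨x, hx⟩ := hall
    exact Finset.prod_eq_zero (mem_univ x) ((h x).resolve_right hx)

lemma N01 (x y : Fin M ⊕ (Fin M ⊕ Fin M)) : N p q r x y = 0 ∨ N p q r x y = 1 := by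
  rcases x with j | j | j <;> rcases y with k | k | k <;>
    simp [N, pm, Matrix.one_apply, ite_eq_iff] <;> tauto

open Classical in
lemma perm_N_eq :
    perm (N p q r) = ((univ.filter fun σ => Good p q r σ).card : ℤ) := by
  unfold perm
  rw [← Finset.sum_boole]
  refine Finset.sum_congr rfl fun σ _ => ?_
  rw [prod_eq_boole _ (fun x => N01 x (σ x))]
  congr 1

open Classical in
lemma card_eq :
    (univ.filter fun σ : Equiv.Perm (Fin M ⊕ (Fin M ⊕ Fin M)) => Good p q r σ).card
      = (univ.filter fun c : Fin M → Bool × Bool =>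
          Function.Bijective (gg p q r c)).card := by
  refine Finset.card_bij' (fun σ _ => toC σ)
    (fun c hc => toPerm p q r c (by simpa using (Finset.mem_filter.mp hc).2)) ?_ ?_ ?_ ?_
  · intro σ hσ
    simp only [Finset.mem_filter, Finset.mem_univ, true_and] at hσ ⊢
    exact gg_bij hσ
  · intro c hc
    simp only [Finset.mem_filter, Finset.mem_univ, true_and]
    exact toPerm_good p q r c _
  · intro σ hσ
    simp only [Finset.mem_filter, Finset.mem_univ, true_and] at hσ
    exact toPerm_toC hσ
  · intro c hc
    exact toC_toPerm c _

open Classical in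
lemma perm_RHS :
    perm ((1 : Matrix (Fin M) (Fin M) ℤ) + pm p + pm q + pm r)
      = ((univ.filter fun c : Fin M → Bool × Bool =>
          Function.Bijective (gg p q r c)).card : ℤ) := by
  have hentry : ∀ i j, ((1 : Matrix (Fin M) (Fin M) ℤ) + pm p + pm q + pm r) i j
      = ∑ s : Bool × Bool, if mm p q r s i = j then (1 : ℤ) else 0 := by
    intro i j
    rw [Fintype.sum_prod_type, Fintype.sum_bool, Fintype.sum_bool, Fintype.sum_bool]
    simp only [mm, pm, Matrix.add_apply, Matrix.one_apply, Matrix.of_apply,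
      Equiv.Perm.one_apply]
    split_ifs <;> simp_all
  calc perm ((1 : Matrix (Fin M) (Fin M) ℤ) + pm p + pm q + pm r)
      = ∑ σ : Equiv.Perm (Fin M), ∏ i, ∑ s : Bool × Bool,
          if mm p q r s i = σ i then (1 : ℤ) else 0 := by
        unfold perm
        exact Finset.sum_congr rfl fun σ _ => Finset.prod_congr rfl fun i _ => hentry i (σ i)
    _ = ∑ σ : Equiv.Perm (Fin M), ∑ c ∈ Fintype.piFinset
          (fun _ : Fin M => (univ : Finset (Bool × Bool))), ∏ i,
          if mm p q r (c i) i = σ i then (1 : ℤ) else 0 := by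
        exact Finset.sum_congr rfl fun σ _ => Finset.prod_univ_sum _ _
    _ = ∑ c ∈ Fintype.piFinset (fun _ : Fin M => (univ : Finset (Bool × Bool))),
          ∑ σ : Equiv.Perm (Fin M), ∏ i,
          if mm p q r (c i) i = σ i then (1 : ℤ) else 0 := Finset.sum_comm
    _ = ∑ c : Fin M → Bool × Bool,
          if Function.Bijective (gg p q r c) then (1 : ℤ) else 0 := by
        rw [Fintype.piFinset_univ]
        refine Finset.sum_congr rfl fun c _ => ?_
        have h1 : ∀ σ : Equiv.Perm (Fin M), (∏ i, if mm p q r (c i) i = σ i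
            then (1 : ℤ) else 0) = if ∀ i, gg p q r c i = σ i then 1 else 0 := by
          intro σ
          rw [Fintype.prod_boole]
          congr 1
        simp only [h1]
        by_cases hb : Function.Bijective (gg p q r c)
        · rw [if_pos hb]
          rw [Finset.sum_eq_single (Equiv.ofBijective _ hb)]
          · exact if_pos fun i => rfl
          · intro σ _ hne
            rw [if_neg]
            intro hall
            exact hne (Equiv.ext fun i => (hall i).symm)
          · intro h; exact absurd (Finset.mem_univ _) h
        · rw [if_neg hb]
          refine Finset.sum_eq_zero fun σ _ => ?_
          rw [if_neg]
          intro hall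
          exact hb (funext hall ▸ σ.bijective)
    _ = _ := by rw [Finset.sum_boole]

end Stmt4

theorem stmt4 {M : ℕ} (P Q R : Matrix (Fin M) (Fin M) ℤ)
    (hP : IsPermMatrix P) (hQ : IsPermMatrix Q) (hR : IsPermMatrix R) :
    perm (Matrix.fromBlocks 1 (Matrix.fromCols 1 0) (Matrix.fromRows 1 Q)
      (Matrix.fromBlocks P 1 R 1)) = perm (1 + P + Q + R) := by
  obtain ⟨p, hp⟩ := hP
  obtain ⟨q, hq⟩ := hQ
  obtain ⟨r, hr⟩ := hR
  have hP' : P = Stmt4.pm p := by ext i j; rw [hp]; rfl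
  have hQ' : Q = Stmt4.pm q := by ext i j; rw [hq]; rfl
  have hR' : R = Stmt4.pm r := by ext i j; rw [hr]; rfl
  rw [hP', hQ', hR']
  show perm (Stmt4.N p q r) = _
  rw [Stmt4.perm_N_eq, Stmt4.perm_RHS, Stmt4.card_eq]
end

section
/- For every integer M ≥ 1, the average over all M×M permutation matrices P of perm(I + P) equals M + 1; that is, (1/M!) · Σ_{P ∈ P_M} perm(I + P) = M + 1, where the permanent is over ℤ and P_M is the set of M×M permutation matrices. -/
open Matrix Finset

/-- Permutations preserving a finset correspond to pairs of permutations. -/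
def stabEquiv {α : Type*} [DecidableEq α] [Fintype α] (S : Finset α) :
    (Equiv.Perm {x // x ∈ S} × Equiv.Perm {x // x ∉ S}) ≃
      {σ : Equiv.Perm α // ∀ x, x ∈ S ↔ σ x ∈ S} where
  toFun fg := ⟨Equiv.Perm.subtypeCongr fg.1 fg.2, by
    intro x
    by_cases h : x ∈ S
    · simp only [h, true_iff]
      rw [Equiv.Perm.subtypeCongr.left_apply _ _ h]
      exact (fg.1 ⟨x, h⟩).2
    · simp only [h, false_iff]
      rw [Equiv.Perm.subtypeCongr.right_apply _ _ h]
      exact (fg.2 ⟨x, h⟩).2⟩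
  invFun σ := (σ.1.subtypePerm fun x => (σ.2 x).symm, σ.1.subtypePerm fun x => not_congr (σ.2 x).symm)
  left_inv := by
    rintro ⟨f, g⟩
    refine Prod.ext (Equiv.ext fun x => Subtype.ext ?_) (Equiv.ext fun x => Subtype.ext ?_)
    · simp [Equiv.Perm.subtypePerm, Equiv.Perm.subtypeCongr.left_apply _ _ x.2]
    · simp [Equiv.Perm.subtypePerm, Equiv.Perm.subtypeCongr.right_apply _ _ x.2]
  right_inv := by
    rintro ⟨σ, hσ⟩
    refine Subtype.ext (Equiv.ext fun x => ?_)
    by_cases h : x ∈ S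
    · rw [Equiv.Perm.subtypeCongr.left_apply _ _ h]; rfl
    · rw [Equiv.Perm.subtypeCongr.right_apply _ _ h]; rfl

lemma card_stab {M : ℕ} (S : Finset (Fin M)) :
    Fintype.card {σ : Equiv.Perm (Fin M) // ∀ x, x ∈ S ↔ σ x ∈ S} =
      (S.card).factorial * (M - S.card).factorial := by
  rw [← Fintype.card_congr (stabEquiv S), Fintype.card_prod, Fintype.card_perm,
    Fintype.card_perm, Fintype.card_coe, Fintype.card_subtype_compl, Fintype.card_coe,
    Fintype.card_fin]


lemma inj_iff {M : ℕ} (σ : Equiv.Perm (Fin M)) (t : Finset (Fin M)) :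
    Function.Injective (fun i => if i ∈ t then i else σ i) ↔ ∀ i ∉ t, σ i ∉ t := by
  constructor
  · intro hinj i hi hσi
    have : (fun j => if j ∈ t then j else σ j) (σ i) = (fun j => if j ∈ t then j else σ j) i := by
      simp [hi, hσi]
    have := hinj this
    exact hi (this ▸ hσi)
  · intro h i j hij
    simp only at hij
    by_cases hi : i ∈ t <;> by_cases hj : j ∈ t <;> simp only [hi, hj, if_pos, if_neg,
      if_true, if_false, not_false_iff] at hij
    · exact hij
    · exact absurd (hij ▸ hi) (h j hj)
    · exact absurd (hij.symm ▸ hj) (h i hi)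
    · exact σ.injective hij
  
lemma exists_tau_iff {M : ℕ} (σ : Equiv.Perm (Fin M)) (t : Finset (Fin M)) :
    (∃ τ : Equiv.Perm (Fin M), ∀ i, τ i = if i ∈ t then i else σ i) ↔ ∀ i ∉ t, σ i ∉ t := by
  rw [← inj_iff σ t]
  constructor
  · rintro ⟨τ, hτ⟩
    have he : ⇑τ = fun i => if i ∈ t then i else σ i := funext hτ
    rw [← he]
    exact τ.injective
  · intro hinj
    exact ⟨Equiv.ofBijective _ (Finite.injective_iff_bijective.mp hinj),
      fun i => rfl⟩

lemma sum_tau {M : ℕ} (h : Fin M → Fin M) :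
    ∑ τ : Equiv.Perm (Fin M), (if ∀ i, τ i = h i then (1 : ℤ) else 0) =
      if ∃ τ : Equiv.Perm (Fin M), ∀ i, τ i = h i then 1 else 0 := by
  by_cases hex : ∃ τ : Equiv.Perm (Fin M), ∀ i, τ i = h i
  · obtain ⟨τ₀, hτ₀⟩ := hex
    rw [if_pos ⟨τ₀, hτ₀⟩]
    rw [Finset.sum_eq_single τ₀]
    · rw [if_pos hτ₀]
    · intro τ _ hne
      rw [if_neg]
      intro hτ
      exact hne (Equiv.ext fun i => (hτ i).trans (hτ₀ i).symm)
    · simp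
  · rw [if_neg hex]
    refine Finset.sum_eq_zero fun τ _ => ?_
    rw [if_neg fun hτ => hex ⟨τ, hτ⟩]

lemma perm_eq_count {M : ℕ} (σ : Equiv.Perm (Fin M)) :
    perm ((1 : Matrix (Fin M) (Fin M) ℤ) +
        Matrix.of fun i j => if σ i = j then (1 : ℤ) else 0) =
      ∑ S : Finset (Fin M), if ∀ i ∈ S, σ i ∈ S then 1 else 0 := by
  unfold perm
  have h1 : ∀ (τ : Equiv.Perm (Fin M)) (i : Fin M),
      ((1 : Matrix (Fin M) (Fin M) ℤ) +
        Matrix.of fun i j => if σ i = j then (1 : ℤ) else 0) i (τ i) =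
      (if τ i = i then (1:ℤ) else 0) + (if τ i = σ i then (1:ℤ) else 0) := by
    intro τ i
    simp [Matrix.add_apply, Matrix.one_apply, eq_comm]
  calc ∑ τ : Equiv.Perm (Fin M), ∏ i, ((1 : Matrix (Fin M) (Fin M) ℤ) +
        Matrix.of fun i j => if σ i = j then (1 : ℤ) else 0) i (τ i)
      = ∑ τ : Equiv.Perm (Fin M), ∑ t ∈ Finset.univ.powerset,
          (∏ i ∈ t, if τ i = i then (1:ℤ) else 0) *
          ∏ i ∈ Finset.univ \ t, if τ i = σ i then (1:ℤ) else 0 := by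
        refine Finset.sum_congr rfl fun τ _ => ?_
        simp_rw [h1 τ]
        rw [Finset.prod_add]
    _ = ∑ t ∈ Finset.univ.powerset, ∑ τ : Equiv.Perm (Fin M),
          (if ∀ i, τ i = if i ∈ t then i else σ i then (1:ℤ) else 0) := by
        rw [Finset.sum_comm]
        refine Finset.sum_congr rfl fun t _ => Finset.sum_congr rfl fun τ _ => ?_
        rw [Finset.prod_boole, Finset.prod_boole]
        have hiff : ((∀ i ∈ t, τ i = i) ∧ (∀ i ∈ Finset.univ \ t, τ i = σ i)) ↔
            (∀ i, τ i = if i ∈ t then i else σ i) := by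
          constructor
          · rintro ⟨ha, hb⟩ i
            by_cases hi : i ∈ t
            · rw [if_pos hi]; exact ha i hi
            · rw [if_neg hi]; exact hb i (Finset.mem_sdiff.mpr ⟨Finset.mem_univ i, hi⟩)
          · intro h
            exact ⟨fun i hi => (h i).trans (if_pos hi),
              fun i hi => (h i).trans (if_neg (Finset.mem_sdiff.mp hi).2)⟩
        by_cases hC : ∀ i, τ i = if i ∈ t then i else σ i
        · rw [if_pos hC, if_pos (hiff.mpr hC).1, if_pos (hiff.mpr hC).2, one_mul]
        · rw [if_neg hC]
          by_cases hA : ∀ i ∈ t, τ i = i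
          · rw [if_neg fun hB => hC (hiff.mp ⟨hA, hB⟩), mul_zero]
          · rw [if_neg hA, zero_mul]
    _ = ∑ t ∈ Finset.univ.powerset, if ∀ i ∉ t, σ i ∉ t then (1:ℤ) else 0 := by
        refine Finset.sum_congr rfl fun t _ => ?_
        rw [sum_tau, if_congr (exists_tau_iff σ t) rfl rfl]
    _ = ∑ S : Finset (Fin M), if ∀ i ∈ S, σ i ∈ S then 1 else 0 := by
        rw [Finset.powerset_univ]
        refine Fintype.sum_equiv ⟨(Compl.compl : Finset (Fin M) → _),
          (Compl.compl : Finset (Fin M) → _), compl_compl, compl_compl⟩ _ _ fun t => ?_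
        refine if_congr ?_ rfl rfl
        simp only [Equiv.coe_fn_mk, Finset.mem_compl]

lemma maps_to_iff {M : ℕ} (σ : Equiv.Perm (Fin M)) (S : Finset (Fin M)) :
    (∀ i ∈ S, σ i ∈ S) ↔ ∀ x, x ∈ S ↔ σ x ∈ S := by
  constructor
  · intro h
    have himg : S.image σ = S := Finset.eq_of_subset_of_card_le
      (fun y hy => by obtain ⟨x, hx, rfl⟩ := Finset.mem_image.mp hy; exact h x hx)
      (le_of_eq (Finset.card_image_of_injective _ σ.injective).symm)
    intro x
    refine ⟨h x, fun hx => ?_⟩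
    rw [← himg] at hx
    obtain ⟨y, hy, hxy⟩ := Finset.mem_image.mp hx
    exact σ.injective hxy ▸ hy
  · intro h i hi
    exact (h i).mp hi

lemma natsum (M : ℕ) :
    ∑ S : Finset (Fin M), (S.card.factorial * (M - S.card).factorial) =
      (M + 1) * M.factorial := by
  have hmaps : ∀ S ∈ (Finset.univ : Finset (Finset (Fin M))), S.card ∈ Finset.range (M + 1) :=
    fun S _ => Finset.mem_range.mpr (Nat.lt_succ_of_le (le_of_le_of_eq (Finset.card_le_univ S)
      (Finset.card_fin M)))
  rw [← Finset.sum_fiberwise_of_maps_to hmaps]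
  have step : ∀ k ∈ Finset.range (M + 1),
      ∑ S ∈ Finset.univ.filter (fun S : Finset (Fin M) => S.card = k),
        (S.card.factorial * (M - S.card).factorial) = M.factorial := by
    intro k hk
    have hk' : k ≤ M := Nat.lt_succ_iff.mp (Finset.mem_range.mp hk)
    have h1 : ∀ S ∈ Finset.univ.filter (fun S : Finset (Fin M) => S.card = k),
        S.card.factorial * (M - S.card).factorial = k.factorial * (M - k).factorial := by
      intro S hS
      rw [(Finset.mem_filter.mp hS).2]
    rw [Finset.sum_congr rfl h1, Finset.sum_const, smul_eq_mul]
    have hcard : (Finset.univ.filter (fun S : Finset (Fin M) => S.card = k)).card =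
        M.choose k := by
      rw [← Finset.powerset_univ, ← Finset.powersetCard_eq_filter,
        Finset.card_powersetCard, Finset.card_fin]
    rw [hcard, ← mul_assoc, Nat.choose_mul_factorial_mul_factorial hk']
  rw [Finset.sum_congr rfl step, Finset.sum_const, smul_eq_mul, Finset.card_range]

theorem stmt7 {M : ℕ} (hM : 1 ≤ M) :
    ∑ σ : Equiv.Perm (Fin M),
      perm ((1 : Matrix (Fin M) (Fin M) ℤ) +
        Matrix.of fun i j => if σ i = j then (1 : ℤ) else 0) =
    ((M : ℤ) + 1) * (M.factorial : ℤ) := by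
  calc ∑ σ : Equiv.Perm (Fin M),
      perm ((1 : Matrix (Fin M) (Fin M) ℤ) +
        Matrix.of fun i j => if σ i = j then (1 : ℤ) else 0)
      = ∑ σ : Equiv.Perm (Fin M), ∑ S : Finset (Fin M),
          if ∀ i ∈ S, σ i ∈ S then (1 : ℤ) else 0 :=
        Finset.sum_congr rfl fun σ _ => perm_eq_count σ
    _ = ∑ S : Finset (Fin M), ∑ σ : Equiv.Perm (Fin M),
          if ∀ x, x ∈ S ↔ σ x ∈ S then (1 : ℤ) else 0 := by
        rw [Finset.sum_comm]
        exact Finset.sum_congr rfl fun S _ => Finset.sum_congr rfl fun σ _ =>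
          if_congr (maps_to_iff σ S) rfl rfl
    _ = ∑ S : Finset (Fin M),
          ((S.card.factorial * (M - S.card).factorial : ℕ) : ℤ) := by
        refine Finset.sum_congr rfl fun S _ => ?_
        rw [Finset.sum_boole, ← card_stab S, Fintype.card_subtype]
    _ = ((M : ℤ) + 1) * (M.factorial : ℤ) := by
        rw [← Nat.cast_sum, natsum]
        push_cast
        ring
end

section
/- For every integer M ≥ 1, Σ_{r=0}^{M} Σ_{s=0}^{r} C(M, r) C(r, s) (M−r+s)! (M−s)! r! ≤ (M!)² · (2^{M+1} − 1). -/
open Matrix Finset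

lemma term_le (M r s : ℕ) (hr : r ≤ M) (hs : s ≤ r) :
    M.choose r * r.choose s * (M - r + s).factorial * (M - s).factorial * r.factorial
      ≤ M.factorial ^ 2 * (M - r + s).choose s := by
  have h1 : M.choose r * r.factorial * (M - r).factorial = M.factorial :=
    Nat.choose_mul_factorial_mul_factorial hr
  have h2 : M.choose s * s.factorial * (M - s).factorial = M.factorial :=
    Nat.choose_mul_factorial_mul_factorial (hs.trans hr)
  have h3 : (M - r + s).choose s * s.factorial * (M - r).factorial
      = (M - r + s).factorial := by
    have := Nat.choose_mul_factorial_mul_factorial (Nat.le_add_left s (M - r))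
    simpa [Nat.add_sub_cancel] using this
  have h4 : r.choose s ≤ M.choose s := Nat.choose_le_choose s hr
  calc M.choose r * r.choose s * (M - r + s).factorial * (M - s).factorial * r.factorial
      ≤ M.choose r * M.choose s * (M - r + s).factorial * (M - s).factorial * r.factorial := by
        gcongr
    _ = M.choose r * M.choose s *
          ((M - r + s).choose s * s.factorial * (M - r).factorial) *
          (M - s).factorial * r.factorial := by rw [h3]
    _ = (M.choose r * r.factorial * (M - r).factorial) *
          (M.choose s * s.factorial * (M - s).factorial) * (M - r + s).choose s := by ring
    _ = M.factorial ^ 2 * (M - r + s).choose s := by rw [h1, h2]; ring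

lemma myInnerSum (M r : ℕ) (hr : r ≤ M) :
    ∑ s ∈ Finset.range (r + 1), (M - r + s).choose s = (M + 1).choose (M - r + 1) := by
  have : ∀ s ∈ Finset.range (r + 1), (M - r + s).choose s = (M - r + s).choose (M - r) := by
    intro s _
    rw [← Nat.choose_symm (Nat.le_add_left s (M - r)), Nat.add_sub_cancel]
  rw [Finset.sum_congr rfl this]
  have key := Nat.sum_Icc_choose M (M - r)
  rw [← key, ← Finset.Ico_add_one_right_eq_Icc, Finset.sum_Ico_eq_sum_range]
  have h1 : M + 1 - (M - r) = r + 1 := by omega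
  rw [h1]

theorem stmt11 (M : ℕ) (hM : 1 ≤ M) :
    ∑ r ∈ Finset.range (M + 1), ∑ s ∈ Finset.range (r + 1),
      M.choose r * r.choose s * (M - r + s).factorial * (M - s).factorial * r.factorial
    ≤ M.factorial ^ 2 * (2 ^ (M + 1) - 1) := by
  calc ∑ r ∈ Finset.range (M + 1), ∑ s ∈ Finset.range (r + 1),
        M.choose r * r.choose s * (M - r + s).factorial * (M - s).factorial * r.factorial
      ≤ ∑ r ∈ Finset.range (M + 1), ∑ s ∈ Finset.range (r + 1),
        M.factorial ^ 2 * (M - r + s).choose s := by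
        refine Finset.sum_le_sum fun r hr => Finset.sum_le_sum fun s hs => ?_
        exact term_le M r s (by simpa [Nat.lt_succ_iff] using hr)
          (by simpa [Nat.lt_succ_iff] using hs)
    _ = M.factorial ^ 2 * ∑ r ∈ Finset.range (M + 1), ∑ s ∈ Finset.range (r + 1),
          (M - r + s).choose s := by
        rw [Finset.mul_sum]
        exact Finset.sum_congr rfl fun r _ => by rw [Finset.mul_sum]
    _ = M.factorial ^ 2 * (2 ^ (M + 1) - 1) := by
        congr 1
        have h1 : ∀ r ∈ Finset.range (M + 1),
            (∑ s ∈ Finset.range (r + 1), (M - r + s).choose s)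
              = (M + 1).choose (M - r + 1) := fun r hr =>
          myInnerSum M r (by simpa [Nat.lt_succ_iff] using hr)
        rw [Finset.sum_congr rfl h1]
        have h2 : ∑ r ∈ Finset.range (M + 1), (M + 1).choose (M - r + 1)
            = ∑ r ∈ Finset.range (M + 1), (M + 1).choose (r + 1) := by
          rw [← Finset.sum_range_reflect]
          refine Finset.sum_congr rfl fun r hr => ?_
          simp only [Finset.mem_range, Nat.lt_succ_iff] at hr
          congr 1
          omega
        rw [h2]
        have h3 := Nat.sum_range_choose (M + 1)
        have h4 : ∑ r ∈ Finset.range (M + 1 + 1), (M + 1).choose r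
            = 1 + ∑ r ∈ Finset.range (M + 1), (M + 1).choose (r + 1) := by
          rw [Finset.sum_range_succ']
          simp [Nat.add_comm]
        omega
end
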